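/- There exists an open well-filtered T0 space that is not ω-well-filtered (hence not well-filtered and not a d-space): the Scott space of P = J ∪ ℕ, where J is Johnstone's dcpo and each k ∈ ℕ lies below (k, ω), is open well-filtered but the directed set ℕ ⊆ P has no supremum, so the space is not ω-well-filtered. -/

import Mathlib

open Set

abbrev JJ : Type := ℕ × WithTop ℕ
abbrev PP : Type := JJ ⊕ ℕ

/-- The order on `J = ℕ × (ℕ ∪ {ω})` (Johnstone's dcpo). -/
def jle (a b : JJ) : Prop :=
  (a.1 = b.1 ∧ a.2 ≤ b.2) ∨ (b.2 = ⊤ ∧ a.2 ≤ (b.1 : WithTop ℕ))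

/-- The order on `P = J ∪ ℕ`. -/
def ple : PP → PP → Prop
  | Sum.inl a, Sum.inl b => jle a b
  | Sum.inr m, Sum.inr n => m ≤ n
  | Sum.inr m, Sum.inl b => b = (m, (⊤ : WithTop ℕ))
  | Sum.inl _, Sum.inr _ => False

def dirP (D : Set PP) : Prop :=
  D.Nonempty ∧ ∀ a ∈ D, ∀ b ∈ D, ∃ c ∈ D, ple a c ∧ ple b c

def isLubP (D : Set PP) (s : PP) : Prop :=
  (∀ d ∈ D, ple d s) ∧ ∀ b : PP, (∀ d ∈ D, ple d b) → ple s b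

def scottOpenP (U : Set PP) : Prop :=
  (∀ x ∈ U, ∀ y : PP, ple x y → y ∈ U) ∧
  ∀ D : Set PP, dirP D → ∀ s : PP, isLubP D s → s ∈ U → (D ∩ U).Nonempty

/-- The Scott topology on `P`. -/
def scottTopP : TopologicalSpace PP where
  IsOpen := scottOpenP
  isOpen_univ := by
    refine ⟨fun _ _ _ _ => trivial, fun D hD _ _ _ => hD.1.imp fun d hd => ⟨hd, trivial⟩⟩
  isOpen_inter := by
    rintro U V ⟨hUu, hUd⟩ ⟨hVu, hVd⟩
    refine ⟨fun x hx y hxy => ⟨hUu x hx.1 y hxy, hVu x hx.2 y hxy⟩, ?_⟩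
    intro D hD s hs hsUV
    obtain ⟨d₁, hd₁D, hd₁U⟩ := hUd D hD s hs hsUV.1
    obtain ⟨d₂, hd₂D, hd₂V⟩ := hVd D hD s hs hsUV.2
    obtain ⟨c, hcD, hc₁, hc₂⟩ := hD.2 d₁ hd₁D d₂ hd₂D
    exact ⟨c, hcD, hUu d₁ hd₁U c hc₁, hVu d₂ hd₂V c hc₂⟩
  isOpen_sUnion := by
    intro S hS
    constructor
    · rintro x ⟨t, htS, hxt⟩ y hxy
      exact ⟨t, htS, (hS t htS).1 x hxt y hxy⟩
    · rintro D hD s hs ⟨t, htS, hst⟩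
      obtain ⟨d, hdD, hdt⟩ := (hS t htS).2 D hD s hs hst
      exact ⟨d, hdD, t, htS, hdt⟩

def RelCpt {X : Type*} [TopologicalSpace X] (A B : Set X) : Prop :=
  A ⊆ B ∧ ∀ 𝒰 : Set (Set X), (∀ U ∈ 𝒰, IsOpen U) → B ⊆ ⋃₀ 𝒰 →
    ∃ 𝒱 ⊆ 𝒰, 𝒱.Finite ∧ A ⊆ ⋃₀ 𝒱

def Saturated {X : Type*} [TopologicalSpace X] (A : Set X) : Prop :=
  A = ⋂₀ {U : Set X | IsOpen U ∧ A ⊆ U}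

def OpenWellFiltered (X : Type*) [TopologicalSpace X] : Prop :=
  ∀ 𝒜 : Set (Set X), 𝒜.Nonempty →
    (∀ A ∈ 𝒜, IsOpen A) →
    (∀ A₁ ∈ 𝒜, ∀ A₂ ∈ 𝒜, ∃ A₃ ∈ 𝒜, RelCpt A₃ A₁ ∧ RelCpt A₃ A₂) →
    ∀ U : Set X, IsOpen U → ⋂₀ 𝒜 ⊆ U → ∃ A ∈ 𝒜, A ⊆ U

def OmegaWellFiltered (X : Type*) [TopologicalSpace X] : Prop :=
  ∀ K : ℕ → Set X, (∀ n, IsCompact (K n) ∧ Saturated (K n)) →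
    (∀ m n : ℕ, ∃ k, K k ⊆ K m ∧ K k ⊆ K n) →
    ∀ U : Set X, IsOpen U → (⋂ n, K n) ⊆ U → ∃ n, K n ⊆ U

-- the parametric open set
def mkO (h : ℕ → Prop) (P : ℕ → WithTop ℕ → Prop) : Set PP :=
  {x | match x with
    | Sum.inl a => P a.1 a.2
    | Sum.inr j => h j}

lemma mem_mkO_inl {h P} {a : JJ} : (Sum.inl a : PP) ∈ mkO h P ↔ P a.1 a.2 := Iff.rfl
lemma mem_mkO_inr {h P} {j : ℕ} : (Sum.inr j : PP) ∈ mkO h P ↔ h j := Iff.rfl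

lemma scottOpen_mkO (h : ℕ → Prop) (P : ℕ → WithTop ℕ → Prop)
    (mono : ∀ m (i i' : WithTop ℕ), P m i → i ≤ i' → P m i')
    (tops : ∀ m (i : ℕ) (m' : ℕ), P m i → i ≤ m' → P m' ⊤)
    (hmono : ∀ j j' : ℕ, h j → j ≤ j' → h j')
    (hc : ∀ j, h j → P j ⊤)
    (tail : ∀ m, P m ⊤ → ∃ N : ℕ, ∀ i : WithTop ℕ, (N : WithTop ℕ) < i → P m i) :
    scottOpenP (mkO h P) := by
  constructor
  · rintro (⟨m, i⟩ | j) hx (⟨m', i'⟩ | j') hxy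
    · rcases hxy with ⟨h1, h2⟩ | ⟨h1, h2⟩
      · simp only at h1
        subst h1; exact mono m i i' hx h2
      · simp only at h1 h2
        subst h1
        rcases i with _ | n
        · exact (WithTop.not_top_le_coe _ h2).elim
        · exact tops m n m' hx (WithTop.coe_le_coe.mp h2)
    · exact hxy.elim
    · cases hxy
      exact hc j hx
    · exact hmono j j' hx hxy
  · intro D hD s hs hsU
    by_contra hemp
    rw [Set.not_nonempty_iff_eq_empty] at hemp
    have hDn : ∀ d ∈ D, d ∉ mkO h P := by
      intro d hd hdU
      exact absurd (Set.mem_inter hd hdU) (by simp [hemp])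
    rcases s with ⟨m, i⟩ | j
    · rcases i with _ | n
      · -- s = (m, ⊤)
        obtain ⟨N, hN⟩ := tail m hsU
        by_cases hinr : (Sum.inr m : PP) ∈ D
        · by_cases hother : ∃ d ∈ D, d ≠ Sum.inr m
          · obtain ⟨d', hd'D, hd'ne⟩ := hother
            obtain ⟨c, hcD, hc1, hc2⟩ := hD.2 _ hinr d' hd'D
            -- d' must be inl
            rcases d' with a' | k'
            · rcases c with c | k
              · cases hc1
                exact hDn _ hcD hsU
              · exact hc2.elim
            · -- d' = inr k', then k' = m from hs.1
              have := hs.1 _ hd'D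
              cases this
              exact hd'ne rfl
          · push_neg at hother
            have hub : ∀ d ∈ D, ple d (Sum.inr m) := by
              intro d hd
              rw [hother d hd]
              exact Nat.le_refl m
            exact hs.2 _ hub
        · -- all elements of D are inl, bounded
          have hbdd : ∀ d ∈ D, ∃ m₂ : ℕ, ∃ j : WithTop ℕ,
              d = Sum.inl (m₂, j) ∧ j ≤ ((max m N : ℕ) : WithTop ℕ) := by
            intro d hd
            rcases d with ⟨m₂, j⟩ | k
            · refine ⟨m₂, j, rfl, ?_⟩
              have hle := hs.1 _ hd
              rcases hle with ⟨h1, _⟩ | ⟨_, h2⟩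
              · simp only at h1; subst h1
                have : ¬ ((N : WithTop ℕ) < j) := fun hlt => hDn _ hd (hN j hlt)
                push_neg at this
                exact this.trans (WithTop.coe_le_coe.mpr (le_max_right _ _))
              · exact h2.trans (WithTop.coe_le_coe.mpr (le_max_left _ _))
            · have := hs.1 _ hd
              have hkm : k = m := by
                cases this; rfl
              exact absurd (hkm ▸ hd) hinr
          set M := max m N + 1 with hM
          have hub : ∀ d ∈ D, ple d (Sum.inl (M, (⊤ : WithTop ℕ))) := by
            intro d hd
            obtain ⟨m₂, j, rfl, hj⟩ := hbdd d hd
            right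
            refine ⟨rfl, hj.trans ?_⟩
            exact_mod_cast Nat.le_succ _
          have hle := hs.2 _ hub
          rcases hle with ⟨h1, _⟩ | ⟨_, h2⟩
          · simp only at h1
            omega
          · exact (WithTop.not_top_le_coe _ h2).elim
      · -- s = (m, n) finite
        have hcol : ∀ d ∈ D, ∃ j : ℕ, d = Sum.inl (m, (j : WithTop ℕ)) ∧ j < n := by
          intro d hd
          have hle := hs.1 _ hd
          rcases d with ⟨m₂, j⟩ | k
          · rcases hle with ⟨h1, h2⟩ | ⟨h1, _⟩
            · simp only at h1; subst h1
              rcases j with _ | j'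
              · exact absurd h2 (WithTop.not_top_le_coe n)
              · refine ⟨j', rfl, ?_⟩
                have hjn : j' ≤ n := WithTop.coe_le_coe.mp h2
                rcases eq_or_lt_of_le hjn with rfl | hlt
                · exact absurd hsU (hDn _ hd)
                · exact hlt
            · exact absurd h1 (by simp)
          · exact absurd hle (by simp [ple, Prod.ext_iff])
        obtain ⟨d₀, hd₀⟩ := hD.1
        obtain ⟨j₀, rfl, hj₀⟩ := hcol _ hd₀
        have hn : 1 ≤ n := by omega
        have hub : ∀ d ∈ D, ple d (Sum.inl (m, ((n - 1 : ℕ) : WithTop ℕ))) := by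
          intro d hd
          obtain ⟨j, rfl, hj⟩ := hcol d hd
          left
          refine ⟨rfl, ?_⟩
          show (j : WithTop ℕ) ≤ ((n - 1 : ℕ) : WithTop ℕ)
          exact WithTop.coe_le_coe.mpr (Nat.le_sub_one_of_lt hj)
        have hle := hs.2 _ hub
        rcases hle with ⟨_, h2⟩ | ⟨h1, _⟩
        · have : n ≤ n - 1 := WithTop.coe_le_coe.mp h2
          omega
        · exact absurd h1 (by simp)
    · -- s = inr j
      have hinrD : ∀ d ∈ D, ∃ k : ℕ, d = Sum.inr k ∧ k < j := by
        intro d hd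
        have hle := hs.1 _ hd
        rcases d with a | k
        · exact hle.elim
        · refine ⟨k, rfl, ?_⟩
          rcases eq_or_lt_of_le (hle : k ≤ j) with rfl | hlt
          · exact absurd hsU (hDn _ hd)
          · exact hlt
      obtain ⟨d₀, hd₀⟩ := hD.1
      obtain ⟨k₀, rfl, hk₀⟩ := hinrD _ hd₀
      have hub : ∀ d ∈ D, ple d (Sum.inr (j - 1)) := by
        intro d hd
        obtain ⟨k, rfl, hk⟩ := hinrD d hd
        exact Nat.le_sub_one_of_lt hk
      have := hs.2 _ hub
      have : j ≤ j - 1 := this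
      omega


-- specific open sets
def Jset : Set PP := mkO (fun _ => False) (fun _ _ => True)
def Wp (p : ℕ) : Set PP := mkO (fun j => p < j) (fun m i => m ≠ p ∧ (p : WithTop ℕ) < i)
def Gq (q : ℕ) : Set PP := mkO (fun j => q < j) (fun _ i => (q : WithTop ℕ) < i)
def Epn (p N : ℕ) : Set PP := mkO (fun _ => False) (fun m i => m = p ∨ (N : WithTop ℕ) < i)

lemma open_Jset : scottOpenP Jset :=
  scottOpen_mkO _ _ (fun _ _ _ _ _ => trivial) (fun _ _ _ _ _ => trivial)
    (fun _ _ h _ => h.elim) (fun _ h => h.elim) (fun _ _ => ⟨0, fun _ _ => trivial⟩)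

lemma open_Wp (p : ℕ) : scottOpenP (Wp p) := by
  refine scottOpen_mkO _ _ ?_ ?_ ?_ ?_ ?_
  · exact fun m i i' ⟨h1, h2⟩ hle => ⟨h1, lt_of_lt_of_le h2 hle⟩
  · intro m i m' ⟨h1, h2⟩ hle
    have hpi : p < i := WithTop.coe_lt_coe.mp h2
    exact ⟨by omega, WithTop.coe_lt_top p⟩
  · exact fun j j' h hle => lt_of_lt_of_le h hle
  · exact fun j h => ⟨by omega, WithTop.coe_lt_top p⟩
  · intro m hm
    exact ⟨p, fun i hi => ⟨hm.1, hi⟩⟩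

lemma open_Gq (q : ℕ) : scottOpenP (Gq q) := by
  refine scottOpen_mkO _ _ ?_ ?_ ?_ ?_ ?_
  · exact fun m i i' h hle => lt_of_lt_of_le h hle
  · exact fun m i m' _ _ => WithTop.coe_lt_top q
  · exact fun j j' h hle => lt_of_lt_of_le h hle
  · exact fun j _ => WithTop.coe_lt_top q
  · exact fun m _ => ⟨q, fun i hi => hi⟩

lemma open_Epn (p N : ℕ) : scottOpenP (Epn p N) := by
  refine scottOpen_mkO _ _ ?_ ?_ ?_ ?_ ?_
  · rintro m i i' (h | h) hle
    · exact Or.inl h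
    · exact Or.inr (lt_of_lt_of_le h hle)
  · exact fun m i m' _ _ => Or.inr (WithTop.coe_lt_top N)
  · exact fun _ _ h _ => h.elim
  · exact fun _ h => h.elim
  · intro m _
    refine ⟨max p N, fun i hi => Or.inr (lt_of_le_of_lt ?_ hi)⟩
    exact WithTop.coe_le_coe.mpr (le_max_right p N)

-- membership simp lemmas
lemma mem_Jset_inl {a : JJ} : (Sum.inl a : PP) ∈ Jset := trivial
lemma mem_Wp_inl {p : ℕ} {a : JJ} : (Sum.inl a : PP) ∈ Wp p ↔ a.1 ≠ p ∧ (p : WithTop ℕ) < a.2 := Iff.rfl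
lemma mem_Wp_inr {p j : ℕ} : (Sum.inr j : PP) ∈ Wp p ↔ p < j := Iff.rfl
lemma mem_Gq_inl {q : ℕ} {a : JJ} : (Sum.inl a : PP) ∈ Gq q ↔ (q : WithTop ℕ) < a.2 := Iff.rfl
lemma mem_Gq_inr {q j : ℕ} : (Sum.inr j : PP) ∈ Gq q ↔ q < j := Iff.rfl
lemma mem_Epn_inl {p N : ℕ} {a : JJ} : (Sum.inl a : PP) ∈ Epn p N ↔ a.1 = p ∨ (N : WithTop ℕ) < a.2 := Iff.rfl

-- the column below a top element
def colD (m : ℕ) : Set PP := {x | ∃ j : ℕ, x = Sum.inl (m, (j : WithTop ℕ))}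

lemma colD_dir (m : ℕ) : dirP (colD m) := by
  refine ⟨⟨Sum.inl (m, (0 : ℕ)), 0, rfl⟩, ?_⟩
  rintro a ⟨j, rfl⟩ b ⟨j', rfl⟩
  refine ⟨Sum.inl (m, ((max j j' : ℕ) : WithTop ℕ)), ⟨max j j', rfl⟩, ?_, ?_⟩
  · exact Or.inl ⟨rfl, WithTop.coe_le_coe.mpr (le_max_left _ _)⟩
  · exact Or.inl ⟨rfl, WithTop.coe_le_coe.mpr (le_max_right _ _)⟩

lemma colD_lub (m : ℕ) : isLubP (colD m) (Sum.inl (m, (⊤ : WithTop ℕ))) := by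
  constructor
  · rintro d ⟨j, rfl⟩
    exact Or.inl ⟨rfl, le_top⟩
  · intro b hb
    rcases b with ⟨m₂, i₂⟩ | k
    · have h1 := hb (Sum.inl (m, ((m₂ + 1 : ℕ) : WithTop ℕ))) ⟨m₂ + 1, rfl⟩
      have hm₂ : m = m₂ := by
        rcases h1 with ⟨h, _⟩ | ⟨_, h⟩
        · exact h
        · have h' : ((m₂ + 1 : ℕ) : WithTop ℕ) ≤ ((m₂ : ℕ) : WithTop ℕ) := h
          have hh : m₂ + 1 ≤ m₂ := by exact_mod_cast h'
          omega
      rcases i₂ with _ | n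
      · exact Or.inl ⟨hm₂, le_refl _⟩
      · have h2 := hb (Sum.inl (m, ((n + 1 : ℕ) : WithTop ℕ))) ⟨n + 1, rfl⟩
        rcases h2 with ⟨_, h⟩ | ⟨h, _⟩
        · have h' : ((n + 1 : ℕ) : WithTop ℕ) ≤ ((n : ℕ) : WithTop ℕ) := h
          have hh : n + 1 ≤ n := by exact_mod_cast h'
          omega
        · exact absurd h (by simp)
    · exact (hb (Sum.inl (m, (0 : ℕ))) ⟨0, rfl⟩).elim

lemma open_col_mem {A : Set PP} (hA : scottOpenP A) (m : ℕ)
    (hm : Sum.inl (m, (⊤ : WithTop ℕ)) ∈ A) : ∃ j : ℕ, Sum.inl (m, (j : WithTop ℕ)) ∈ A := by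
  obtain ⟨d, hdD, hdA⟩ := hA.2 (colD m) (colD_dir m) _ (colD_lub m) hm
  obtain ⟨j, rfl⟩ := hdD
  exact ⟨j, hdA⟩

lemma open_topTail {A : Set PP} (hA : scottOpenP A) (hne : A.Nonempty) :
    ∃ N : ℕ, ∀ m, N ≤ m → Sum.inl (m, (⊤ : WithTop ℕ)) ∈ A := by
  have key : ∀ n : ℕ, ∀ m : ℕ, Sum.inl (m, (n : WithTop ℕ)) ∈ A →
      ∃ N : ℕ, ∀ m', N ≤ m' → Sum.inl (m', (⊤ : WithTop ℕ)) ∈ A := by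
    intro n m hmem
    exact ⟨n, fun m' hm' =>
      hA.1 _ hmem (Sum.inl (m', (⊤ : WithTop ℕ))) (Or.inr ⟨rfl, WithTop.coe_le_coe.mpr hm'⟩)⟩
  obtain ⟨x, hx⟩ := hne
  rcases x with ⟨m, i⟩ | k
  · rcases i with _ | n
    · obtain ⟨j, hj⟩ := open_col_mem hA m hx
      exact key j m hj
    · exact key n m hx
  · have htop : Sum.inl (k, (⊤ : WithTop ℕ)) ∈ A :=
      hA.1 _ hx (Sum.inl (k, (⊤ : WithTop ℕ))) rfl
    obtain ⟨j, hj⟩ := open_col_mem hA k htop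
    exact key j k hj


-- no nonempty open set is relatively compact in anything
lemma not_relCpt {A B : Set PP} (hA : scottOpenP A) (hne : A.Nonempty) :
    ¬ @RelCpt PP scottTopP A B := by
  classical
  letI : TopologicalSpace PP := scottTopP
  rintro ⟨-, hrc⟩
  obtain ⟨N₀, hN₀⟩ := open_topTail hA hne
  -- a m : a finite element of column m belonging to A, for m ≥ N₀
  set a : ℕ → ℕ := fun m =>
    if h : ∃ j : ℕ, Sum.inl (m, (j : WithTop ℕ)) ∈ A then h.choose else 0 with ha
  have haA : ∀ m, N₀ ≤ m → Sum.inl (m, ((a m : ℕ) : WithTop ℕ)) ∈ A := by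
    intro m hm
    have hex : ∃ j : ℕ, Sum.inl (m, (j : WithTop ℕ)) ∈ A :=
      open_col_mem hA m (hN₀ m hm)
    simp only [ha, dif_pos hex]
    exact hex.choose_spec
  -- the defeating cover
  set V : ℕ → Set PP := fun t =>
    mkO (fun _ => True) (fun m i => m ≤ t ∨ ((a m : ℕ) : WithTop ℕ) < i) with hV
  have hVopen : ∀ t, scottOpenP (V t) := by
    intro t
    refine scottOpen_mkO _ _ ?_ ?_ ?_ ?_ ?_
    · rintro m i i' (h | h) hle
      · exact Or.inl h
      · exact Or.inr (lt_of_lt_of_le h hle)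
    · exact fun m i m' _ _ => Or.inr (WithTop.coe_lt_top _)
    · exact fun _ _ _ _ => trivial
    · exact fun j _ => Or.inr (WithTop.coe_lt_top _)
    · intro m _
      refine ⟨max t (a m), fun i hi => Or.inr (lt_of_le_of_lt ?_ hi)⟩
      exact WithTop.coe_le_coe.mpr (le_max_right t (a m))
  obtain ⟨𝒱, h𝒱sub, h𝒱fin, h𝒱cov⟩ := hrc (Set.range V)
    (by rintro U ⟨t, rfl⟩; exact hVopen t)
    (by
      rintro (⟨m, i⟩ | k) -
      · exact ⟨V m, ⟨m, rfl⟩, Or.inl (le_refl m)⟩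
      · exact ⟨V 0, ⟨0, rfl⟩, trivial⟩)
  -- bound the indices of the finite subcover
  set f : Set PP → ℕ := fun W => if h : ∃ t, W = V t then h.choose else 0 with hf
  set M : ℕ := h𝒱fin.toFinset.sup f with hM
  set m₀ : ℕ := max (M + 1) N₀ with hm₀
  have hx : Sum.inl (m₀, ((a m₀ : ℕ) : WithTop ℕ)) ∈ A := haA m₀ (le_max_right _ _)
  obtain ⟨W, hW𝒱, hxW⟩ := h𝒱cov hx
  have hWt : ∃ t, W = V t := by
    obtain ⟨t, ht⟩ := h𝒱sub hW𝒱
    exact ⟨t, ht.symm⟩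
  have hfW : f W = hWt.choose := by simp only [hf, dif_pos hWt]
  have htM : hWt.choose ≤ M := by
    rw [← hfW, hM]
    exact Finset.le_sup (h𝒱fin.mem_toFinset.mpr hW𝒱)
  rw [hWt.choose_spec] at hxW
  rcases hxW with h | h
  · have : m₀ ≤ M := h.trans htM
    omega
  · exact lt_irrefl _ h


/-- The Scott space of `P` is a T0 open well-filtered space which is not ω-well-filtered;
in particular the directed set `ℕ ⊆ P` has no supremum. -/
theorem stmt18 :
    @T0Space PP scottTopP ∧ @OpenWellFiltered PP scottTopP ∧
    (¬ ∃ s : PP, isLubP (Set.range (Sum.inr : ℕ → PP)) s) ∧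
    ¬ @OmegaWellFiltered PP scottTopP := by
  letI : TopologicalSpace PP := scottTopP
  have hopen_iff : ∀ U : Set PP, IsOpen U ↔ scottOpenP U := fun U => Iff.rfl
  refine ⟨?_, ?_, ?_, ?_⟩
  · -- T0
    rw [t0Space_iff_inseparable]
    intro x y hins
    have hio : ∀ U : Set PP, scottOpenP U → (x ∈ U ↔ y ∈ U) := fun U hU =>
      inseparable_iff_forall_isOpen.mp hins U hU
    rcases x with ⟨m, i⟩ | k <;> rcases y with ⟨m', i'⟩ | k'
    · by_cases hm : m = m'
      · subst hm
        have hii : i = i' := by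
          rcases lt_trichotomy i i' with hlt | heq | hlt
        -- i < i'
          · rcases i with _ | n
            · exact absurd hlt not_top_lt
            · have h' : ((n : ℕ) : WithTop ℕ) < ((n : ℕ) : WithTop ℕ) :=
                (hio (Gq n) (open_Gq n)).mpr hlt
              exact absurd h' (lt_irrefl _)
          · exact heq
          · rcases i' with _ | n'
            · exact absurd hlt not_top_lt
            · have h' : ((n' : ℕ) : WithTop ℕ) < ((n' : ℕ) : WithTop ℕ) :=
                (hio (Gq n') (open_Gq n')).mp hlt
              exact absurd h' (lt_irrefl _)
        rw [hii]
      · exfalso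
        rcases i' with _ | n'
        · rcases i with _ | n
          · -- both tops, m ≠ m'
            have hxW : (Sum.inl (m, (⊤ : WithTop ℕ)) : PP) ∈ Wp m' :=
              ⟨hm, WithTop.coe_lt_top m'⟩
            have := (hio (Wp m') (open_Wp m')).mp hxW
            exact this.1 rfl
          · -- x = (m, n) finite, y = (m', ⊤)
            have hyE : (Sum.inl (m', (⊤ : WithTop ℕ)) : PP) ∈ Epn m' n :=
              Or.inl rfl
            have := (hio (Epn m' n) (open_Epn m' n)).mpr hyE
            rcases this with h | h
            · exact hm h
            · exact lt_irrefl _ h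
        · -- y = (m', n') finite
          have hxE : (Sum.inl (m, i) : PP) ∈ Epn m n' := Or.inl rfl
          have := (hio (Epn m n') (open_Epn m n')).mp hxE
          rcases this with h | h
          · exact hm h.symm
          · exact lt_irrefl _ h
    · exact absurd ((hio Jset open_Jset).mp trivial) (fun h => h)
    · exact absurd ((hio Jset open_Jset).mpr trivial) (fun h => h)
    · have hkk : k = k' := by
        rcases lt_trichotomy k k' with hlt | heq | hlt
        · exact absurd ((hio (Gq k) (open_Gq k)).mpr hlt) (lt_irrefl k)
        · exact heq
        · exact absurd ((hio (Gq k') (open_Gq k')).mp hlt) (lt_irrefl k')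
      rw [hkk]
  · -- open well-filtered
    intro 𝒜 h1 h2 h3 U hU hsub
    obtain ⟨A₁, hA₁⟩ := h1
    obtain ⟨A₃, hA₃, hrc, -⟩ := h3 A₁ hA₁ A₁ hA₁
    rcases Set.eq_empty_or_nonempty A₃ with rfl | hne
    · exact ⟨∅, hA₃, Set.empty_subset U⟩
    · exact absurd hrc (not_relCpt (h2 A₃ hA₃) hne)
  · -- no lub of ℕ
    rintro ⟨s, hub, -⟩
    rcases s with ⟨p, i⟩ | n
    · have := hub (Sum.inr (p + 1)) ⟨p + 1, rfl⟩
      have hp : (p, i) = (p + 1, (⊤ : WithTop ℕ)) := this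
      have : p = p + 1 := congrArg Prod.fst hp
      omega
    · have : n + 1 ≤ n := hub (Sum.inr (n + 1)) ⟨n + 1, rfl⟩
      omega
  · -- not ω-well-filtered
    intro hωWF
    set K : ℕ → Set PP := fun n => ⋂₀ {U : Set PP | scottOpenP U ∧ Sum.inr n ∈ U} with hK
    have hKmem : ∀ n, (Sum.inr n : PP) ∈ K n := fun n U hU => hU.2
    have hKsub : ∀ n (U : Set PP), scottOpenP U → Sum.inr n ∈ U → K n ⊆ U :=
      fun n U hU hn x hx => hx U ⟨hU, hn⟩
    have hcs : ∀ n, IsCompact (K n) ∧ Saturated (K n) := by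
      intro n
      constructor
      · apply isCompact_of_finite_subcover
        intro ι Us hUo hcov
        obtain ⟨i, hi⟩ := Set.mem_iUnion.mp (hcov (hKmem n))
        refine ⟨{i}, fun x hx => ?_⟩
        exact Set.mem_biUnion (Finset.mem_singleton_self i) (hKsub n (Us i) (hUo i) hi hx)
      · apply Set.Subset.antisymm
        · intro x hx U hU
          exact hU.2 hx
        · intro x hx V hV
          exact hx V ⟨hV.1, hKsub n V hV.1 hV.2⟩
    have hfil : ∀ m n : ℕ, ∃ k, K k ⊆ K m ∧ K k ⊆ K n := by
      intro m n
      refine ⟨max m n, ?_, ?_⟩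
      · exact fun x hx U hU =>
          hx U ⟨hU.1, hU.1.1 _ hU.2 (Sum.inr (max m n)) (le_max_left m n)⟩
      · exact fun x hx U hU =>
          hx U ⟨hU.1, hU.1.1 _ hU.2 (Sum.inr (max m n)) (le_max_right m n)⟩
    have hempty : (⋂ n, K n) ⊆ (∅ : Set PP) := by
      intro x hx
      have hx' := Set.mem_iInter.mp hx
      exfalso
      rcases x with ⟨p, i⟩ | k
      · have h1 : (Sum.inl (p, i) : PP) ∈ Wp p :=
          hKsub (p + 1) (Wp p) (open_Wp p) (Nat.lt_succ_self p) (hx' (p + 1))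
        exact h1.1 rfl
      · have h1 : (Sum.inr k : PP) ∈ Gq k :=
          hKsub (k + 1) (Gq k) (open_Gq k) (Nat.lt_succ_self k) (hx' (k + 1))
        exact lt_irrefl k h1
    obtain ⟨n, hn⟩ := hωWF K hcs hfil ∅
      ⟨fun x hx => hx.elim, fun D hD s hs hs0 => hs0.elim⟩ hempty
    exact hn (hKmem n)
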